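/- Let δ, ρ ∈ (0, 1/4). Define Cons(δ, ρ) ⊆ S^{n−1} as the set of unit vectors x for which there exists λ ∈ ℝ with |x_i − λ| ≤ ρ/√n for at least (1−δ)n indices i ∈ [n]. Then there exist ν, ν' > 0 and a finite set K of positive reals, all depending only on δ and ρ, such that for every x ∈ S^{n−1} \ Cons(δ, ρ) at least one of the following holds: (1) there exist κ, κ' ∈ K such that |x_i| ≤ κ/√n for at least νn indices i, and (κ+ν')/√n < |x_i| ≤ κ'/√n for at least νn indices i; or (2) there exist κ, κ' ∈ K such that κ/√n < x_i < κ'/√n for at least νn indices i, and −κ'/√n < x_i < −κ/√n for at least νn indices i. -/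

import Mathlib

open Finset

set_option maxHeartbeats 1600000

/-- For `δ, ρ ∈ (0,1/4)` there exist `ν, ν' > 0` and a finite set
`K` of positive reals, depending only on `δ, ρ`, such that every unit vector
which is not `(δ,ρ)`-almost-constant satisfies one of the two listed
level-set conditions. -/
theorem nonconstant_vectors_admissible
    (δ ρ : ℝ) (hδ : δ ∈ Set.Ioo (0 : ℝ) (1/4)) (hρ : ρ ∈ Set.Ioo (0 : ℝ) (1/4)) :
    ∃ ν ν' : ℝ, 0 < ν ∧ 0 < ν' ∧ ∃ K : Finset ℝ, (∀ κ ∈ K, 0 < κ) ∧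
    ∀ (n : ℕ) (x : Fin n → ℝ), (∑ i, x i ^ 2 = 1) →
      (¬ ∃ lam : ℝ,
        (1 - δ) * n ≤ ((univ.filter fun i => |x i - lam| ≤ ρ / Real.sqrt n).card : ℝ)) →
      ((∃ κ ∈ K, ∃ κ' ∈ K,
          ν * n ≤ ((univ.filter fun i => |x i| ≤ κ / Real.sqrt n).card : ℝ) ∧
          ν * n ≤ ((univ.filter fun i =>
            (κ + ν') / Real.sqrt n < |x i| ∧ |x i| ≤ κ' / Real.sqrt n).card : ℝ)) ∨
       (∃ κ ∈ K, ∃ κ' ∈ K,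
          ν * n ≤ ((univ.filter fun i =>
            κ / Real.sqrt n < x i ∧ x i < κ' / Real.sqrt n).card : ℝ) ∧
          ν * n ≤ ((univ.filter fun i =>
            -(κ' / Real.sqrt n) < x i ∧ x i < -(κ / Real.sqrt n)).card : ℝ))) := by
  obtain ⟨hδ0, hδ4⟩ := hδ
  obtain ⟨hρ0, hρ4⟩ := hρ
  obtain ⟨m, hm8⟩ : ∃ m : ℕ, (8:ℝ)/(ρ*δ) ≤ m := ⟨⌈8/(ρ*δ)⌉₊, Nat.le_ceil _⟩
  set ν : ℝ := δ/(1000*(m+1)) with hν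
  have hνpos : 0 < ν := by positivity
  have hνm : ((m:ℝ)+1) * ν = δ/1000 := by
    rw [hν]; field_simp
  have hνsmall : ν ≤ δ/1000 := by
    nlinarith [Nat.cast_nonneg (α := ℝ) m, hνpos]
  refine ⟨ν, ρ/8, hνpos, by positivity,
    (Finset.Icc 1 (2*(m+2))).image (fun j : ℕ => (j:ℝ)*(ρ/8)), ?_, ?_⟩
  · intro κ hκ
    simp only [mem_image, mem_Icc] at hκ
    obtain ⟨j, ⟨hj1, _⟩, rfl⟩ := hκ
    have h1 : (1:ℝ) ≤ (j:ℝ) := by exact_mod_cast hj1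
    nlinarith
  intro n x hx hnc
  push_neg at hnc
  have hn0 : n ≠ 0 := by rintro rfl; simp at hx
  have hn1 : (1:ℝ) ≤ (n:ℝ) := by exact_mod_cast Nat.one_le_iff_ne_zero.mpr hn0
  have hnpos : (0:ℝ) < (n:ℝ) := by linarith
  have hspos : (0:ℝ) < Real.sqrt n := Real.sqrt_pos.mpr hnpos
  set s : ℝ := Real.sqrt n with hsdef
  have hssq : s^2 = (n:ℝ) := Real.sq_sqrt hnpos.le
  set t : ℕ → ℝ := fun j => (j:ℝ)*(ρ/4) with ht
  have htmono : ∀ {a b : ℕ}, a ≤ b → t a ≤ t b := by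
    intro a b hab
    have hc : (a:ℝ) ≤ b := by exact_mod_cast hab
    simp only [ht]; nlinarith
  set D : ℕ → ℕ := fun j => (univ.filter fun i => |x i| < t j / s).card with hD
  set d : ℕ → ℝ := fun j => ((D j : ℕ) : ℝ) with hd
  have hdnonneg : ∀ j, 0 ≤ d j := fun j => Nat.cast_nonneg _
  have hdmono : ∀ {a b : ℕ}, a ≤ b → d a ≤ d b := by
    intro a b hab
    have hcards : D a ≤ D b := by
      apply card_le_card
      intro i hi
      simp only [mem_filter, mem_univ, true_and] at hi ⊢
      calc |x i| < t a / s := hi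
      _ ≤ t b / s := by gcongr; exact htmono hab
    simp only [hd]
    exact_mod_cast hcards
  have hd0 : d 0 = 0 := by
    simp only [hd, hD, Nat.cast_eq_zero, card_eq_zero]
    apply filter_false_of_mem
    intro i _
    simp only [ht, Nat.cast_zero, zero_mul, zero_div, not_lt]
    exact abs_nonneg _
  -- tail bound
  have htail : (n:ℝ) - δ/2 * n ≤ d (m+1) := by
    have htM : (2:ℝ)/δ ≤ t (m+1) := by
      have hc : t (m+1) = ((m:ℝ)+1)*(ρ/4) := by simp only [ht]; push_cast; ring
      rw [hc, div_le_iff₀ hδ0]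
      rw [div_le_iff₀ (by positivity : (0:ℝ) < ρ*δ)] at hm8
      nlinarith [Nat.cast_nonneg (α := ℝ) m]
    have htMpos : (0:ℝ) < t (m+1) := by
      have h2δ : (0:ℝ) < 2/δ := by positivity
      linarith
    set T := (univ : Finset (Fin n)).filter (fun i => t (m+1) / s ≤ |x i|) with hT
    have hcompl : D (m+1) + T.card = n := by
      have := card_filter_add_card_filter_not
        (s := (univ : Finset (Fin n))) (p := fun i => |x i| < t (m+1)/s)
      simpa [hT, not_lt] using this
    have hTsum : (T.card : ℝ) * (2/(δ*n)) ≤ 1 := by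
      have h1 : ∀ i ∈ T, 2/(δ*(n:ℝ)) ≤ x i ^ 2 := by
        intro i hi
        simp only [hT, mem_filter] at hi
        have hge : t (m+1) / s ≤ |x i| := hi.2
        have h2 : (t (m+1)/s)^2 ≤ |x i|^2 := by
          apply pow_le_pow_left₀ (by positivity) hge
        rw [sq_abs] at h2
        have h3 : (t (m+1)/s)^2 = t (m+1)^2 / n := by rw [div_pow, hssq]
        have h8 : (8:ℝ) ≤ 2/δ := by rw [le_div_iff₀ hδ0]; linarith
        have h4 : (2:ℝ)/δ ≤ t (m+1)^2 := by nlinarith [htM, h8, htMpos]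
        have h5 : (2/δ)/(n:ℝ) ≤ t (m+1)^2 / n := by gcongr
        rw [h3] at h2
        rw [div_div] at h5
        linarith
      calc (T.card : ℝ) * (2/(δ*n)) ≤ ∑ i ∈ T, x i ^2 := by
            have := Finset.card_nsmul_le_sum T (fun i => x i ^2) (2/(δ*(n:ℝ))) h1
            simpa [nsmul_eq_mul] using this
      _ ≤ ∑ i, x i ^2 := Finset.sum_le_sum_of_subset_of_nonneg (subset_univ _)
            (fun i _ _ => sq_nonneg _)
      _ = 1 := hx
    have hTcard : (T.card : ℝ) ≤ δ/2 * n := by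
      rw [mul_div_assoc'] at hTsum
      rw [div_le_one (by positivity)] at hTsum
      linarith
    have hcast : (D (m+1) : ℝ) + (T.card:ℝ) = n := by exact_mod_cast hcompl
    simp only [hd]
    linarith
  -- telescoping lemma
  have tele : ∀ (k a : ℕ), (∀ j, a < j → j ≤ a + k → d j - d (j-1) ≤ ν*n) →
      d (a+k) - d a ≤ k * (ν*n) := by
    intro k
    induction k with
    | zero => intro a _; simp
    | succ k ih =>
      intro a h
      have h1 : d (a+k) - d a ≤ k * (ν*n) := ih a (fun j hj1 hj2 => h j hj1 (by omega))
      have h2 : d (a+k+1) - d (a+k) ≤ ν*n := by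
        have := h (a+k+1) (by omega) (by omega)
        simpa using this
      have heq : (a + (k+1)) = (a+k+1) := by omega
      rw [heq]
      push_cast
      linarith
  -- the populated-bucket set
  set G := (Finset.Icc 1 (m+1)).filter (fun j => ν * n ≤ d j - d (j-1)) with hG
  by_cases hA : ∃ j ∈ G, ∃ k ∈ G, j + 2 ≤ k
  · -- Case A : two separated buckets → option 1
    obtain ⟨j, hjG, k, hkG, hjk⟩ := hA
    simp only [hG, mem_filter, mem_Icc] at hjG hkG
    obtain ⟨⟨hj1, hjm⟩, hcj⟩ := hjG
    obtain ⟨⟨hk1, hkm⟩, hck⟩ := hkG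
    left
    refine ⟨((2*j:ℕ):ℝ)*(ρ/8), ?_, ((2*(m+1):ℕ):ℝ)*(ρ/8), ?_, ?_, ?_⟩
    · exact mem_image.mpr ⟨2*j, mem_Icc.mpr ⟨by omega, by omega⟩, rfl⟩
    · exact mem_image.mpr ⟨2*(m+1), mem_Icc.mpr ⟨by omega, by omega⟩, rfl⟩
    · -- small-bucket count
      have hκt : ((2*j:ℕ):ℝ)*(ρ/8) = t j := by simp only [ht]; push_cast; ring
      rw [hκt]
      have hsub : (univ.filter fun i => |x i| < t j / s) ⊆
          (univ.filter fun i => |x i| ≤ t j / s) := by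
        intro i hi
        simp only [mem_filter, mem_univ, true_and] at hi ⊢
        exact hi.le
      have hcards := card_le_card hsub
      have hDj : d j ≤ ((univ.filter fun i => |x i| ≤ t j / s).card : ℝ) := by
        simp only [hd]
        exact_mod_cast hcards
      have := hdnonneg (j-1)
      linarith
    · -- annulus count
      have hκt : ((2*j:ℕ):ℝ)*(ρ/8) = t j := by simp only [ht]; push_cast; ring
      have hκ't : ((2*(m+1):ℕ):ℝ)*(ρ/8) = t (m+1) := by simp only [ht]; push_cast; ring
      rw [hκt, hκ't]
      set A := (univ : Finset (Fin n)).filter (fun i =>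
        (t j + ρ/8) / s < |x i| ∧ |x i| ≤ t (m+1) / s) with hAset
      have hsub : (univ.filter fun i => |x i| < t k / s) ⊆
          (univ.filter fun i => |x i| < t (k-1) / s) ∪ A := by
        intro i hi
        simp only [mem_filter, mem_univ, true_and] at hi
        by_cases hsmall : |x i| < t (k-1) / s
        · exact mem_union_left _ (by simp [mem_filter, hsmall])
        · apply mem_union_right
          simp only [hAset, mem_filter, mem_univ, true_and]
          push_neg at hsmall
          constructor
          · have hlt : t j + ρ/8 < t (k-1) := by
              have hcast : ((k-1:ℕ):ℝ) = (k:ℝ) - 1 := by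
                have h1k : 1 ≤ k := by omega
                push_cast [Nat.cast_sub h1k]; ring
              have hjk' : (j:ℝ) + 2 ≤ (k:ℝ) := by exact_mod_cast hjk
              simp only [ht]
              rw [hcast]
              nlinarith
            calc (t j + ρ/8)/s < t (k-1)/s := div_lt_div_of_pos_right hlt hspos
            _ ≤ |x i| := hsmall
          · have hle : t k ≤ t (m+1) := htmono (by omega)
            have h2 : t k / s ≤ t (m+1)/s := by gcongr
            linarith [hi]
      have hcards : D k ≤ D (k-1) + A.card := by
        calc D k ≤ ((univ.filter fun i => |x i| < t (k-1) / s) ∪ A).card :=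
              card_le_card hsub
        _ ≤ D (k-1) + A.card := card_union_le _ _
      have hdk : d k ≤ d (k-1) + (A.card : ℝ) := by
        simp only [hd]
        exact_mod_cast hcards
      linarith
  · -- no two separated buckets
    push_neg at hA
    by_cases hGne : G.Nonempty
    · obtain ⟨j0, hj0G, hj0min⟩ : ∃ j0, j0 ∈ G ∧ ∀ j ∈ G, j0 ≤ j :=
        ⟨G.min' hGne, G.min'_mem hGne, fun j hj => G.min'_le j hj⟩
      have hj0mem := hj0G
      simp only [hG, mem_filter, mem_Icc] at hj0mem
      obtain ⟨⟨hj01, hj0m⟩, hcj0⟩ := hj0mem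
      have hnotG : ∀ j, 1 ≤ j → j ≤ m+1 → j ≠ j0 → j ≠ j0+1 → d j - d (j-1) ≤ ν*n := by
        intro j h1 h2 h3 h4
        by_contra hcon
        push_neg at hcon
        have hjG : j ∈ G := by
          simp only [hG, mem_filter, mem_Icc]
          exact ⟨⟨h1, h2⟩, hcon.le⟩
        have hge := hj0min j hjG
        have hlt := hA j0 hj0G j hjG
        omega
      have hbound1 : d (j0 - 1) ≤ ((m:ℝ)+1) * (ν*n) := by
        have h := tele (j0-1) 0 (fun j hj1 hj2 => hnotG j (by omega) (by omega) (by omega) (by omega))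
        simp only [Nat.zero_add, hd0, sub_zero] at h
        have hc : ((j0-1:ℕ):ℝ) ≤ (m:ℝ)+1 := by
          have hle : j0 - 1 ≤ m+1 := by omega
          calc ((j0-1:ℕ):ℝ) ≤ ((m+1:ℕ):ℝ) := by exact_mod_cast hle
          _ = (m:ℝ)+1 := by push_cast; ring
        have hνn : 0 ≤ ν*n := by positivity
        nlinarith
      have hbound2 : d (m+1) - d (j0+1) ≤ ((m:ℝ)+1) * (ν*n) := by
        rcases le_or_gt (j0+1) (m+1) with hle | hlt
        · have h := tele ((m+1)-(j0+1)) (j0+1)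
            (fun j hj1 hj2 => hnotG j (by omega) (by omega) (by omega) (by omega))
          have heq : (j0+1) + ((m+1)-(j0+1)) = m+1 := by omega
          rw [heq] at h
          have hc : (((m+1)-(j0+1):ℕ):ℝ) ≤ (m:ℝ)+1 := by
            have hle2 : (m+1)-(j0+1) ≤ m+1 := by omega
            calc (((m+1)-(j0+1):ℕ):ℝ) ≤ ((m+1:ℕ):ℝ) := by exact_mod_cast hle2
            _ = (m:ℝ)+1 := by push_cast; ring
          have hνn : 0 ≤ ν*n := by positivity
          nlinarith
        · have hmono2 : d (m+1) ≤ d (j0+1) := hdmono (by omega)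
          have hνn : (0:ℝ) ≤ ((m:ℝ)+1) * (ν*n) := by positivity
          linarith
      have hband : (1 - δ/2 - δ/500)*n ≤ d (j0+1) - d (j0-1) := by
        have h1 : ((m:ℝ)+1) * (ν*n) = δ/1000 * n := by rw [← mul_assoc, hνm]
        rw [h1] at hbound1 hbound2
        linarith
      rcases Nat.lt_or_ge j0 2 with hj0lt | hj02
      · -- j0 = 1 : contradiction with λ = 0 window
        exfalso
        have hj0eq : j0 = 1 := by omega
        have hsub : (univ.filter fun i => |x i| < t (j0+1) / s) ⊆
            (univ.filter fun i => |x i - 0| ≤ ρ / s) := by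
          intro i hi
          simp only [mem_filter, mem_univ, true_and, sub_zero] at hi ⊢
          have ht2 : t (j0+1) ≤ ρ := by
            simp only [ht, hj0eq]; push_cast; nlinarith
          have hts : t (j0+1)/s ≤ ρ/s := by gcongr
          linarith
        have hw := hnc 0
        have hcard : d (j0+1) ≤ ((univ.filter fun i => |x i - 0| ≤ ρ / s).card : ℝ) := by
          simp only [hd]
          exact_mod_cast card_le_card hsub
        have hd1 : d (j0-1) = 0 := by rw [hj0eq]; simpa using hd0
        have hpos2 : (0:ℝ) < (δ/2 - δ/500) * n := by
          have : (0:ℝ) < δ/2 - δ/500 := by linarith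
          positivity
        linarith
      · -- j0 ≥ 2 : option 2
        obtain ⟨a, rfl⟩ : ∃ a, j0 = a + 2 := ⟨j0 - 2, by omega⟩
        rw [show a+2-1 = a+1 from by omega, show a+2+1 = a+3 from by omega] at hband
        right
        refine ⟨((2*a+1:ℕ):ℝ)*(ρ/8), ?_, ((2*a+6:ℕ):ℝ)*(ρ/8), ?_, ?_⟩
        · exact mem_image.mpr ⟨2*a+1, mem_Icc.mpr ⟨by omega, by omega⟩, rfl⟩
        · exact mem_image.mpr ⟨2*a+6, mem_Icc.mpr ⟨by omega, by omega⟩, rfl⟩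
        set κ : ℝ := ((2*a+1:ℕ):ℝ)*(ρ/8) with hκ
        set κ' : ℝ := ((2*a+6:ℕ):ℝ)*(ρ/8) with hκ'
        have hκt : κ = t (a+1) - ρ/8 := by simp only [hκ, ht]; push_cast; ring
        have hκ't : κ' = t (a+3) := by simp only [hκ', ht]; push_cast; ring
        set P := (univ : Finset (Fin n)).filter (fun i => κ/s < x i ∧ x i < κ'/s) with hP
        set N := (univ : Finset (Fin n)).filter
          (fun i => -(κ'/s) < x i ∧ x i < -(κ/s)) with hN
        -- band splits into P and N
        have hsub : (univ.filter fun i => |x i| < t (a+3) / s) ⊆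
            ((univ.filter fun i => |x i| < t (a+1) / s) ∪ P) ∪ N := by
          intro i hi
          simp only [mem_filter, mem_univ, true_and] at hi
          by_cases hsmall : |x i| < t (a+1) / s
          · exact mem_union_left _ (mem_union_left _ (by simp [mem_filter, hsmall]))
          · push_neg at hsmall
            have hκlt : κ/s < t (a+1)/s := by
              have : κ < t (a+1) := by rw [hκt]; linarith
              exact div_lt_div_of_pos_right this hspos
            rcases le_or_gt 0 (x i) with hpos | hneg
            · apply mem_union_left; apply mem_union_right
              simp only [hP, mem_filter, mem_univ, true_and]
              rw [abs_of_nonneg hpos] at hi hsmall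
              exact ⟨lt_of_lt_of_le hκlt hsmall, by rw [hκ't]; exact hi⟩
            · apply mem_union_right
              simp only [hN, mem_filter, mem_univ, true_and]
              rw [abs_of_neg hneg] at hi hsmall
              constructor
              · rw [hκ't]; linarith
              · linarith
        have hcards : d (a+3) ≤ d (a+1) + (P.card:ℝ) + (N.card:ℝ) := by
          have h1 : D (a+3) ≤ D (a+1) + P.card + N.card := by
            have h2 := card_le_card hsub
            have h3 := card_union_le ((univ.filter fun i => |x i| < t (a+1) / s) ∪ P) N
            have h4 := card_union_le (univ.filter fun i => |x i| < t (a+1) / s) P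
            simp only [hD]
            omega
          simp only [hd]
          exact_mod_cast h1
        -- window bounds
        have hPwin : (P.card : ℝ) < (1-δ) * n := by
          have hsubP : P ⊆ univ.filter fun i => |x i - t (a+2)/s| ≤ ρ / s := by
            intro i hi
            simp only [hP, mem_filter, mem_univ, true_and] at hi
            simp only [mem_filter, mem_univ, true_and]
            obtain ⟨h1, h2⟩ := hi
            rw [abs_le]
            have hl0 : -ρ ≤ κ - t (a+2) := by
              rw [hκt]; simp only [ht]; push_cast; nlinarith
            have hr0 : κ' - t (a+2) ≤ ρ := by
              rw [hκ't]; simp only [ht]; push_cast; nlinarith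
            have hl : (-ρ)/s ≤ (κ - t (a+2))/s := by gcongr
            have hr : (κ' - t (a+2))/s ≤ ρ/s := by gcongr
            constructor
            · calc -(ρ/s) = (-ρ)/s := by ring
              _ ≤ (κ - t (a+2))/s := hl
              _ = κ/s - t (a+2)/s := by ring
              _ ≤ x i - t (a+2)/s := by linarith
            · calc x i - t (a+2)/s ≤ κ'/s - t (a+2)/s := by linarith
              _ = (κ' - t (a+2))/s := by ring
              _ ≤ ρ/s := hr
          calc (P.card : ℝ) ≤ _ := by exact_mod_cast card_le_card hsubP
          _ < (1-δ)*n := hnc (t (a+2)/s)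
        have hNwin : (N.card : ℝ) < (1-δ) * n := by
          have hsubN : N ⊆ univ.filter fun i => |x i - (-(t (a+2)/s))| ≤ ρ / s := by
            intro i hi
            simp only [hN, mem_filter, mem_univ, true_and] at hi
            simp only [mem_filter, mem_univ, true_and]
            obtain ⟨h1, h2⟩ := hi
            rw [sub_neg_eq_add, abs_le]
            have hl0 : -ρ ≤ t (a+2) - κ' := by
              rw [hκ't]; simp only [ht]; push_cast; nlinarith
            have hr0 : t (a+2) - κ ≤ ρ := by
              rw [hκt]; simp only [ht]; push_cast; nlinarith
            have hl : (-ρ)/s ≤ (t (a+2) - κ')/s := by gcongr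
            have hr : (t (a+2) - κ)/s ≤ ρ/s := by gcongr
            constructor
            · calc -(ρ/s) = (-ρ)/s := by ring
              _ ≤ (t (a+2) - κ')/s := hl
              _ = -(κ'/s) + t (a+2)/s := by ring
              _ ≤ x i + t (a+2)/s := by linarith
            · calc x i + t (a+2)/s ≤ -(κ/s) + t (a+2)/s := by linarith
              _ = (t (a+2) - κ)/s := by ring
              _ ≤ ρ/s := hr
          calc (N.card : ℝ) ≤ _ := by exact_mod_cast card_le_card hsubN
          _ < (1-δ)*n := hnc (-(t (a+2)/s))
        have hνn : ν * n ≤ δ/1000 * n := by nlinarith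
        constructor
        · linarith
        · linarith
    · -- G empty : contradiction
      exfalso
      have hGe : ∀ j, 1 ≤ j → j ≤ m+1 → d j - d (j-1) ≤ ν*n := by
        intro j h1 h2
        by_contra hcon
        push_neg at hcon
        exact hGne ⟨j, by simp only [hG, mem_filter, mem_Icc]; exact ⟨⟨h1, h2⟩, hcon.le⟩⟩
      have h := tele (m+1) 0 (fun j hj1 hj2 => hGe j (by omega) (by omega))
      simp only [Nat.zero_add, hd0, sub_zero] at h
      have h1 : ((m:ℝ)+1) * (ν*n) = δ/1000 * n := by rw [← mul_assoc, hνm]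
      have h2 : ((m+1:ℕ):ℝ) * (ν*n) = δ/1000 * n := by push_cast; linarith [h1]
      rw [h2] at h
      have hc : (0:ℝ) < 1 - δ/2 - δ/1000 := by linarith
      nlinarith [mul_pos hc hnpos]
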